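/- Let Ω be a nonempty finite set, P and Q probability distributions on Ω with the same support, and A ⊆ Ω an event with Pr_P[A] > 0. Then Pr_Q[A] ≥ exp(−(KL(P‖Q) + ln 2)/Pr_P[A]), where Pr_P[A] = ∑_{ω ∈ A} P ω and Pr_Q[A] = ∑_{ω ∈ A} Q ω. -/

import Mathlib

open Finset

open scoped Classical

/-- Log-sum inequality via Jensen's inequality for `x ↦ x * log x`. -/
lemma log_sum_ineq {Ω : Type*} (T : Finset Ω) (f g : Ω → ℝ)
    (hf : ∀ ω ∈ T, 0 ≤ f ω) (hg : ∀ ω ∈ T, 0 < g ω) :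
    (∑ ω ∈ T, f ω) * Real.log ((∑ ω ∈ T, f ω) / (∑ ω ∈ T, g ω))
      ≤ ∑ ω ∈ T, f ω * Real.log (f ω / g ω) := by
  rcases T.eq_empty_or_nonempty with h | hT
  · simp [h]
  set F := ∑ ω ∈ T, f ω with hF
  set G := ∑ ω ∈ T, g ω with hG
  have hGpos : 0 < G := Finset.sum_pos hg hT
  have hw : ∀ ω ∈ T, 0 ≤ g ω / G := fun ω hω => div_nonneg (hg ω hω).le hGpos.le
  have hw1 : ∑ ω ∈ T, g ω / G = 1 := by
    rw [← Finset.sum_div, ← hG, div_self hGpos.ne']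
  have hmem : ∀ ω ∈ T, f ω / g ω ∈ Set.Ici (0:ℝ) := fun ω hω =>
    div_nonneg (hf ω hω) (hg ω hω).le
  have key := Real.convexOn_mul_log.map_sum_le hw hw1 hmem
  have h1 : ∑ ω ∈ T, (g ω / G) • (f ω / g ω) = F / G := by
    have hterm : ∀ ω ∈ T, (g ω / G) • (f ω / g ω) = f ω / G := by
      intro ω hω
      have hg0 : g ω ≠ 0 := (hg ω hω).ne'
      have hG0 : G ≠ 0 := hGpos.ne'
      field_simp
      rw [smul_eq_mul]; field_simp
    rw [Finset.sum_congr rfl hterm, ← Finset.sum_div]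
  have h2 : ∑ ω ∈ T, (g ω / G) • ((f ω / g ω) * Real.log (f ω / g ω))
      = (∑ ω ∈ T, f ω * Real.log (f ω / g ω)) / G := by
    rw [Finset.sum_div]
    refine Finset.sum_congr rfl fun ω hω => ?_
    have : g ω ≠ 0 := (hg ω hω).ne'
    simp only [smul_eq_mul]
    field_simp
  rw [h1, h2, div_mul_eq_mul_div] at key
  exact (div_le_div_iff_of_pos_right hGpos).mp key

/-- `x - 1/2 ≤ x * log (2x)` for nonnegative `x`. -/
lemma half_le_mul_log_two_mul {x : ℝ} (hx : 0 ≤ x) :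
    x - 1/2 ≤ x * Real.log (2 * x) := by
  rcases hx.eq_or_lt with h | h
  · simp [← h]
  · have h2x : 0 < 2 * x := by linarith
    have hlog : Real.log (1 / (2 * x)) ≤ 1 / (2 * x) - 1 :=
      Real.log_le_sub_one_of_pos (by positivity)
    rw [Real.log_div one_ne_zero h2x.ne', Real.log_one] at hlog
    have hlb : 1 - 1 / (2 * x) ≤ Real.log (2 * x) := by linarith
    have hx0 : x ≠ 0 := h.ne'
    calc x - 1/2 = x * (1 - 1 / (2 * x)) := by field_simp
      _ ≤ x * Real.log (2 * x) := mul_le_mul_of_nonneg_left hlb hx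

/-- Binary entropy bound: `p log p + q log q ≥ - log 2` when `p + q = 1`. -/
lemma neg_log_two_le_entropy {p q : ℝ} (hp : 0 ≤ p) (hq : 0 ≤ q) (hpq : p + q = 1) :
    -Real.log 2 ≤ p * Real.log p + q * Real.log q := by
  have key : ∀ x : ℝ, 0 ≤ x → x * Real.log (2 * x) = x * Real.log 2 + x * Real.log x := by
    intro x hx
    rcases hx.eq_or_lt with h | h
    · simp [← h]
    · rw [Real.log_mul two_ne_zero h.ne']; ring
  have h1 := half_le_mul_log_two_mul hp
  have h2 := half_le_mul_log_two_mul hq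
  rw [key p hp] at h1
  rw [key q hq] at h2
  have hl : p * Real.log 2 + q * Real.log 2 = Real.log 2 := by
    rw [← add_mul, hpq, one_mul]
  linarith

/-- change-of-measure lower bound on the probability of an event
under `Q` in terms of its probability under `P` and `KL(P‖Q)`. -/
theorem stmt_5 (Ω : Type*) [Fintype Ω] [Nonempty Ω]
    (P Q : Ω → ℝ)
    (hP0 : ∀ ω, 0 ≤ P ω) (hP1 : ∑ ω, P ω = 1)
    (hQ0 : ∀ ω, 0 ≤ Q ω) (hQ1 : ∑ ω, Q ω = 1)
    (hsupp : ∀ ω, 0 < P ω ↔ 0 < Q ω)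
    (A : Finset Ω) (hA : 0 < ∑ ω ∈ A, P ω) :
    ∑ ω ∈ A, Q ω ≥
      Real.exp (-((∑ ω ∈ Finset.univ.filter (fun ω => 0 < P ω),
          P ω * Real.log (P ω / Q ω)) + Real.log 2) / (∑ ω ∈ A, P ω)) := by
  set S := Finset.univ.filter (fun ω => 0 < P ω) with hS
  set pA := ∑ ω ∈ A, P ω with hpA
  set qA := ∑ ω ∈ A, Q ω with hqA
  set KL := ∑ ω ∈ S, P ω * Real.log (P ω / Q ω) with hKL
  have hSP : ∀ ω ∈ S, 0 < P ω := fun ω hω => (Finset.mem_filter.mp hω).2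
  have hSQ : ∀ ω ∈ S, 0 < Q ω := fun ω hω => (hsupp ω).mp (hSP ω hω)
  -- P-sums restricted to S
  have hF1 : ∑ ω ∈ S ∩ A, P ω = pA := by
    refine Finset.sum_subset (Finset.inter_subset_right) fun ω hω hω' => ?_
    by_contra h
    have hpos : 0 < P ω := (hP0 ω).lt_of_ne (Ne.symm h)
    exact hω' (Finset.mem_inter.mpr ⟨Finset.mem_filter.mpr ⟨Finset.mem_univ ω, hpos⟩, hω⟩)
  have hSsum : ∑ ω ∈ S, P ω = 1 := by
    rw [hS, Finset.sum_filter_of_ne fun ω _ h => (hP0 ω).lt_of_ne (Ne.symm h), hP1]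
  set F2 := ∑ ω ∈ S \ A, P ω with hF2def
  have hF2 : F2 = 1 - pA := by
    have := Finset.sum_inter_add_sum_sdiff S A P
    rw [hF1, hSsum] at this
    linarith
  -- S ∩ A is nonempty
  obtain ⟨ω₀, hω₀A, hω₀⟩ : ∃ ω ∈ A, 0 < P ω := by
    by_contra h
    push_neg at h
    have : pA ≤ 0 := Finset.sum_nonpos h
    linarith
  have hne : (S ∩ A).Nonempty :=
    ⟨ω₀, Finset.mem_inter.mpr ⟨Finset.mem_filter.mpr ⟨Finset.mem_univ _, hω₀⟩, hω₀A⟩⟩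
  set G1 := ∑ ω ∈ S ∩ A, Q ω with hG1def
  have hG1pos : 0 < G1 := Finset.sum_pos (fun ω hω => hSQ ω (Finset.mem_inter.mp hω).1) hne
  have hG1le : G1 ≤ qA :=
    Finset.sum_le_sum_of_subset_of_nonneg Finset.inter_subset_right fun ω _ _ => hQ0 ω
  have hqApos : 0 < qA := lt_of_lt_of_le hG1pos hG1le
  -- Jensen on S ∩ A
  have J1 : pA * Real.log (pA / G1) ≤ ∑ ω ∈ S ∩ A, P ω * Real.log (P ω / Q ω) := by
    have := log_sum_ineq (S ∩ A) P Q (fun ω _ => hP0 ω)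
      (fun ω hω => hSQ ω (Finset.mem_inter.mp hω).1)
    rwa [hF1] at this
  -- Jensen on S \ A
  have J2 : F2 * Real.log F2 ≤ ∑ ω ∈ S \ A, P ω * Real.log (P ω / Q ω) := by
    rcases (S \ A).eq_empty_or_nonempty with h | h
    · simp [hF2def, h]
    · have hF2pos : 0 < F2 :=
        Finset.sum_pos (fun ω hω => hSP ω (Finset.mem_sdiff.mp hω).1) h
      set G2 := ∑ ω ∈ S \ A, Q ω with hG2def
      have hG2pos : 0 < G2 :=
        Finset.sum_pos (fun ω hω => hSQ ω (Finset.mem_sdiff.mp hω).1) h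
      have hG2le : G2 ≤ 1 := by
        rw [← hQ1]
        exact Finset.sum_le_sum_of_subset_of_nonneg (Finset.subset_univ _)
          fun ω _ _ => hQ0 ω
      have := log_sum_ineq (S \ A) P Q (fun ω _ => hP0 ω)
        (fun ω hω => hSQ ω (Finset.mem_sdiff.mp hω).1)
      refine le_trans ?_ this
      rw [Real.log_div hF2pos.ne' hG2pos.ne']
      have hlogG2 : Real.log G2 ≤ 0 := Real.log_nonpos hG2pos.le hG2le
      nlinarith
  -- lower bound first Jensen term
  have B1 : pA * (Real.log pA - Real.log qA) ≤ pA * Real.log (pA / G1) := by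
    rw [Real.log_div hA.ne' hG1pos.ne']
    have : Real.log G1 ≤ Real.log qA := Real.log_le_log hG1pos hG1le
    nlinarith
  -- combine
  have hsplit := Finset.sum_inter_add_sum_sdiff S A
    (fun ω => P ω * Real.log (P ω / Q ω))
  have hF2nonneg : 0 ≤ F2 := Finset.sum_nonneg fun ω _ => hP0 ω
  have hent : -Real.log 2 ≤ pA * Real.log pA + F2 * Real.log F2 :=
    neg_log_two_le_entropy hA.le hF2nonneg (by rw [hF2]; ring)
  have hKLge : -(KL + Real.log 2) ≤ pA * Real.log qA := by
    have : pA * (Real.log pA - Real.log qA) + F2 * Real.log F2 ≤ KL := by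
      rw [hKL, ← hsplit]
      exact add_le_add (le_trans B1 J1) J2
    nlinarith
  have hdiv : -(KL + Real.log 2) / pA ≤ Real.log qA := by
    rw [div_le_iff₀ hA]
    nlinarith
  have hfin : Real.exp (-(KL + Real.log 2) / pA) ≤ qA := by
    calc Real.exp (-(KL + Real.log 2) / pA) ≤ Real.exp (Real.log qA) :=
          Real.exp_le_exp.mpr hdiv
      _ = qA := Real.exp_log hqApos
  exact hfin
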